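/- Let k be a positive integer with k ≡ 0 (mod 4) and k ≥ 8. Then for every real x ∈ [k/4 − 1, k/2 − 2] the complex number ζ(2x+2)·ζ(k−2x−2) has zero imaginary part, and the function x ↦ Re( ζ(2x+2)·ζ(k−2x−2) ) is strictly increasing on the interval [k/4 − 1, k/2 − 2]. -/

import Mathlib

set_option maxHeartbeats 1000000


open Complex Set

namespace ZetaProdAux

/-- Summability of the shifted `p`-series. -/
lemma gsummable {s : ℝ} (hs : 1 < s) :
    Summable (fun n : ℕ => ((n : ℝ) + 1) ^ (-s)) := by
  have h : Summable (fun n : ℕ => (n : ℝ) ^ (-s)) :=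
    Real.summable_nat_rpow.mpr (by linarith)
  have h2 := (summable_nat_add_iff 1).mpr h
  refine h2.congr fun n => ?_
  push_cast
  ring_nf

/-- Zeta at a real argument `> 1` is the real series. -/
lemma zeta_eq (s : ℝ) (hs : 1 < s) :
    riemannZeta (s : ℂ) = ((∑' n : ℕ, ((n : ℝ) + 1) ^ (-s) : ℝ) : ℂ) := by
  rw [zeta_eq_tsum_one_div_nat_add_one_cpow (by simpa using hs), Complex.ofReal_tsum]
  refine tsum_congr fun n => ?_
  have hnn : (0 : ℝ) ≤ (n : ℝ) + 1 := by positivity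
  rw [Real.rpow_neg hnn, Complex.ofReal_inv, Complex.ofReal_cpow hnn]
  push_cast
  rw [one_div]

lemma key_le {r u v : ℝ} (hr : 0 < r) (hu : 0 ≤ u) (huv : u ≤ v) :
    r ^ u + r ^ (-u) ≤ r ^ v + r ^ (-v) := by
  have e1 : u + (v - u) = v := by ring
  have e2 : -v + (v - u) = -u := by ring
  have hid : r ^ v + r ^ (-v) - (r ^ u + r ^ (-u))
      = (r ^ u - r ^ (-v)) * (r ^ (v - u) - 1) := by
    rw [sub_mul, mul_sub, mul_sub, ← Real.rpow_add hr, ← Real.rpow_add hr, e1, e2]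
    ring
  rcases le_or_gt 1 r with h1 | h1
  · have f1 : r ^ (-v) ≤ r ^ u := Real.rpow_le_rpow_of_exponent_le h1 (by linarith)
    have f2 : r ^ (0 : ℝ) ≤ r ^ (v - u) :=
      Real.rpow_le_rpow_of_exponent_le h1 (by linarith)
    rw [Real.rpow_zero] at f2
    nlinarith
  · have f1 : r ^ u ≤ r ^ (-v) :=
      Real.rpow_le_rpow_of_exponent_ge hr h1.le (by linarith)
    have f2 : r ^ (v - u) ≤ r ^ (0 : ℝ) :=
      Real.rpow_le_rpow_of_exponent_ge hr h1.le (by linarith)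
    rw [Real.rpow_zero] at f2
    nlinarith

lemma key_lt {r u v : ℝ} (hr : 1 < r) (hu : 0 ≤ u) (huv : u < v) :
    r ^ u + r ^ (-u) < r ^ v + r ^ (-v) := by
  have hr0 : (0 : ℝ) < r := by linarith
  have e1 : u + (v - u) = v := by ring
  have e2 : -v + (v - u) = -u := by ring
  have hid : r ^ v + r ^ (-v) - (r ^ u + r ^ (-u))
      = (r ^ u - r ^ (-v)) * (r ^ (v - u) - 1) := by
    rw [sub_mul, mul_sub, mul_sub, ← Real.rpow_add hr0, ← Real.rpow_add hr0, e1, e2]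
    ring
  have f1 : r ^ (-v) < r ^ u := by
    calc r ^ (-v) < r ^ (0 : ℝ) :=
          Real.rpow_lt_rpow_of_exponent_lt hr (by linarith)
      _ ≤ r ^ u := Real.rpow_le_rpow_of_exponent_le hr.le hu
  have f2 : r ^ (0 : ℝ) < r ^ (v - u) :=
    Real.rpow_lt_rpow_of_exponent_lt hr (by linarith)
  rw [Real.rpow_zero] at f2
  nlinarith

lemma pair_eq {p q : ℝ} (hp : 0 < p) (hq : 0 < q) (c A : ℝ) :
    p ^ (-A) * q ^ (A - c) = (p * q) ^ (-(c / 2)) * (q / p) ^ (A - c / 2) := by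
  rw [Real.rpow_def_of_pos hp, Real.rpow_def_of_pos hq,
    Real.rpow_def_of_pos (mul_pos hp hq), Real.rpow_def_of_pos (div_pos hq hp),
    Real.log_mul hp.ne' hq.ne', Real.log_div hq.ne' hp.ne', ← Real.exp_add, ← Real.exp_add]
  congr 1
  ring

lemma pair_le {p q c A A' : ℝ} (hp : 0 < p) (hq : 0 < q)
    (h1 : c / 2 ≤ A) (h2 : A ≤ A') :
    p ^ (-A) * q ^ (A - c) + q ^ (-A) * p ^ (A - c)
      ≤ p ^ (-A') * q ^ (A' - c) + q ^ (-A') * p ^ (A' - c) := by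
  have hqp : 0 < q / p := div_pos hq hp
  have hrw : ∀ B : ℝ, q ^ (-B) * p ^ (B - c)
      = (p * q) ^ (-(c / 2)) * (q / p) ^ (-(B - c / 2)) := by
    intro B
    rw [pair_eq hq hp c B, mul_comm q p]
    congr 1
    rw [Real.rpow_neg hqp.le, ← Real.inv_rpow hqp.le, inv_div]
  rw [pair_eq hp hq c A, pair_eq hp hq c A', hrw A, hrw A']
  have hC : (0 : ℝ) ≤ (p * q) ^ (-(c / 2)) := Real.rpow_nonneg (by positivity) _
  have hk := key_le hqp (u := A - c / 2) (v := A' - c / 2) (by linarith) (by linarith)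
  nlinarith

lemma pair_lt {p q c A A' : ℝ} (hp : 0 < p) (hpq : p < q)
    (h1 : c / 2 ≤ A) (h2 : A < A') :
    p ^ (-A) * q ^ (A - c) + q ^ (-A) * p ^ (A - c)
      < p ^ (-A') * q ^ (A' - c) + q ^ (-A') * p ^ (A' - c) := by
  have hq : 0 < q := hp.trans hpq
  have hqp : 1 < q / p := (one_lt_div hp).mpr hpq
  have hqp0 : (0 : ℝ) < q / p := by linarith
  have hrw : ∀ B : ℝ, q ^ (-B) * p ^ (B - c)
      = (p * q) ^ (-(c / 2)) * (q / p) ^ (-(B - c / 2)) := by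
    intro B
    rw [pair_eq hq hp c B, mul_comm q p]
    congr 1
    rw [Real.rpow_neg hqp0.le, ← Real.inv_rpow hqp0.le, inv_div]
  rw [pair_eq hp hq c A, pair_eq hp hq c A', hrw A, hrw A']
  have hC : (0 : ℝ) < (p * q) ^ (-(c / 2)) := Real.rpow_pos_of_pos (by positivity) _
  have hk := key_lt hqp (u := A - c / 2) (v := A' - c / 2) (by linarith) (by linarith)
  nlinarith

/-- The product of the two series as a sum over pairs. -/
lemma prod_eq {c A : ℝ} (h1 : 1 < A) (h2 : 1 < c - A) :
    (∑' n : ℕ, ((n : ℝ) + 1) ^ (-A)) * (∑' n : ℕ, ((n : ℝ) + 1) ^ (-(c - A)))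
      = ∑' p : ℕ × ℕ, ((p.1 : ℝ) + 1) ^ (-A) * ((p.2 : ℝ) + 1) ^ (A - c) := by
  rw [Summable.tsum_mul_tsum (gsummable h1) (gsummable h2)
    (Summable.mul_of_nonneg (gsummable h1) (gsummable h2)
      (fun n => Real.rpow_nonneg (by positivity) _)
      (fun n => Real.rpow_nonneg (by positivity) _))]
  refine tsum_congr fun p => ?_
  rw [show -(c - A) = A - c by ring]

lemma summable_pairs {c A : ℝ} (h1 : 1 < A) (h2 : 1 < c - A) :
    Summable (fun p : ℕ × ℕ => ((p.1 : ℝ) + 1) ^ (-A) * ((p.2 : ℝ) + 1) ^ (A - c)) := by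
  have := Summable.mul_of_nonneg (gsummable h1) (gsummable h2)
    (fun n => Real.rpow_nonneg (by positivity) _)
    (fun n => Real.rpow_nonneg (by positivity) _)
  refine this.congr fun p => ?_
  rw [show -(c - A) = A - c by ring]

end ZetaProdAux

open ZetaProdAux in
/-- For `k ≡ 0 (mod 4)`, `k ≥ 8`, the function `x ↦ ζ(2x+2)·ζ(k−2x−2)` is real-valued on
`[k/4 − 1, k/2 − 2]` and its real part is strictly increasing on this interval. -/
theorem zeta_prod_real_strictMonoOn
    (k : ℕ) (hk4 : k % 4 = 0) (hk8 : 8 ≤ k) :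
    (∀ x : ℝ, x ∈ Set.Icc ((k : ℝ) / 4 - 1) ((k : ℝ) / 2 - 2) →
      (riemannZeta (2 * (x : ℂ) + 2) * riemannZeta ((k : ℂ) - 2 * (x : ℂ) - 2)).im = 0) ∧
    StrictMonoOn
      (fun x : ℝ =>
        (riemannZeta (2 * (x : ℂ) + 2) * riemannZeta ((k : ℂ) - 2 * (x : ℂ) - 2)).re)
      (Set.Icc ((k : ℝ) / 4 - 1) ((k : ℝ) / 2 - 2)) := by
  have hk8' : (8 : ℝ) ≤ (k : ℝ) := by exact_mod_cast hk8
  set c : ℝ := (k : ℝ) with hc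
  -- rewriting the complex product as a real number for x in the interval
  have main : ∀ x : ℝ, x ∈ Set.Icc (c / 4 - 1) (c / 2 - 2) →
      riemannZeta (2 * (x : ℂ) + 2) * riemannZeta ((k : ℂ) - 2 * (x : ℂ) - 2)
        = (((∑' n : ℕ, ((n : ℝ) + 1) ^ (-(2 * x + 2))) *
            (∑' n : ℕ, ((n : ℝ) + 1) ^ (-(c - (2 * x + 2)))) : ℝ) : ℂ) := by
    intro x hx
    obtain ⟨hx1, hx2⟩ := hx
    have hA : 1 < 2 * x + 2 := by nlinarith
    have hB : 1 < c - (2 * x + 2) := by nlinarith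
    have c1 : (2 * (x : ℂ) + 2) = ((2 * x + 2 : ℝ) : ℂ) := by push_cast; ring
    have c2 : ((k : ℂ) - 2 * (x : ℂ) - 2) = ((c - (2 * x + 2) : ℝ) : ℂ) := by
      rw [hc]; push_cast; ring
    rw [c1, c2, zeta_eq _ hA, zeta_eq _ hB, ← Complex.ofReal_mul]
  constructor
  · intro x hx
    rw [main x hx]
    exact Complex.ofReal_im _
  · intro x hx y hy hxy
    simp only
    rw [main x hx, main y hy, Complex.ofReal_re, Complex.ofReal_re]
    obtain ⟨hx1, hx2⟩ := hx
    obtain ⟨hy1, hy2⟩ := hy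
    have hAx : 1 < 2 * x + 2 := by nlinarith
    have hBx : 1 < c - (2 * x + 2) := by nlinarith
    have hAy : 1 < 2 * y + 2 := by nlinarith
    have hBy : 1 < c - (2 * y + 2) := by nlinarith
    have hcA : c / 2 ≤ 2 * x + 2 := by nlinarith
    rw [prod_eq hAx hBx, prod_eq hAy hBy]
    -- symmetrized picture: double both sides
    set A : ℝ := 2 * x + 2 with hA
    set A' : ℝ := 2 * y + 2 with hA'
    have hAA' : A < A' := by simp only [hA, hA']; linarith
    set S : ℝ → ℕ × ℕ → ℝ :=
      fun B p => ((p.1 : ℝ) + 1) ^ (-B) * ((p.2 : ℝ) + 1) ^ (B - c) with hS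
    have hswap : ∀ B : ℝ, 1 < B → 1 < c - B →
        (∑' p : ℕ × ℕ, S B p) = ∑' p : ℕ × ℕ, S B (p.2, p.1) := by
      intro B _ _
      exact ((Equiv.prodComm ℕ ℕ).tsum_eq (fun p => S B p)).symm
    have hsum : ∀ B : ℝ, 1 < B → 1 < c - B → Summable (S B) := by
      intro B h1 h2
      exact summable_pairs h1 h2
    have hsum_swap : ∀ B : ℝ, 1 < B → 1 < c - B →
        Summable (fun p : ℕ × ℕ => S B (p.2, p.1)) := by
      intro B h1 h2
      exact ((Equiv.prodComm ℕ ℕ).summable_iff).mpr (hsum B h1 h2)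
    have double : ∀ B : ℝ, 1 < B → 1 < c - B →
        2 * (∑' p : ℕ × ℕ, S B p) = ∑' p : ℕ × ℕ, (S B p + S B (p.2, p.1)) := by
      intro B h1 h2
      rw [Summable.tsum_add (hsum B h1 h2) (hsum_swap B h1 h2)]
      rw [← hswap B h1 h2]
      ring
    have key : (∑' p : ℕ × ℕ, S A p) < ∑' p : ℕ × ℕ, S A' p := by
      have hlt : 2 * (∑' p : ℕ × ℕ, S A p) < 2 * (∑' p : ℕ × ℕ, S A' p) := by
        rw [double A hAx hBx, double A' hAy hBy]
        refine Summable.tsum_lt_tsum (i := ((0, 1) : ℕ × ℕ)) ?_ ?_ ?_ ?_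
        · intro p
          exact pair_le (by positivity) (by positivity) hcA hAA'.le
        · simp only [hS]
          have := pair_lt (p := (1 : ℝ)) (q := (2 : ℝ)) (c := c) (A := A) (A' := A')
            one_pos one_lt_two hcA hAA'
          push_cast
          convert this using 2 <;> norm_num <;> rfl
        · exact (hsum A hAx hBx).add (hsum_swap A hAx hBx)
        · exact (hsum A' hAy hBy).add (hsum_swap A' hAy hBy)
      linarith
    exact key
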